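/- arXiv:1412.6888 — 2 statements merged into one kernel-verified Lean document; each statement's English description precedes it below -/
import Mathlib

section
/- Let A be an abelian group, Λ a set of primes, and N(Λ) the multiplicative monoid of positive integers all of whose prime divisors lie in Λ. Let {B_m}_{m∈N(Λ)} be a projective system of abelian groups (indexed by divisibility) and {φ_m : A/mA → B_m} a morphism of projective systems. Suppose (a) every φ_m is injective, and (b) there exists N ∈ N(Λ) such that N annihilates the torsion subgroup of B_Λ := lim_{m∈N(Λ)} B_m. Then the kernel of the natural map A → A_Λ := lim_{m∈N(Λ)} A/mA is l-divisible for every prime l ∈ Λ. -/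
/-- `NLam L m` : `m` is a positive integer all of whose prime divisors lie in `L`. -/
def NLam (L : Set ℕ) (m : ℕ) : Prop := 0 < m ∧ ∀ p : ℕ, p.Prime → p ∣ m → p ∈ L

/-- Multiplication by `m` as an additive homomorphism. -/
def smulHom (A : Type*) [AddCommGroup A] (m : ℕ) : A →+ A where
  toFun := fun x => m • x
  map_zero' := smul_zero m
  map_add' := fun a b => smul_add m a b

/-- The subgroup `mA` of `A`. -/
def smulSub (A : Type*) [AddCommGroup A] (m : ℕ) : AddSubgroup A := (smulHom A m).range

/-- Let `A` be an abelian group, `L` a set of primes, `{B m}` a projective system of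
abelian groups indexed by `N(L)` (ordered by divisibility) and `φ m : A/mA → B m` a
morphism of projective systems with each `φ m` injective (for `m ∈ N(L)`).  If some
`N ∈ N(L)` annihilates the torsion of `B_Λ = lim B m` (compatible families), then the
kernel of `A → A_Λ = lim A/mA`, i.e. `{x | x ∈ mA for all m ∈ N(L)}`, is `l`-divisible
for every prime `l ∈ L`. -/
theorem kernel_to_limit_l_divisible
    {A : Type*} [AddCommGroup A] (L : Set ℕ) (hL : ∀ p ∈ L, p.Prime)
    (B : ℕ → Type*) [∀ m, AddCommGroup (B m)]
    (T : ∀ m m' : ℕ, m' ∣ m → (B m →+ B m'))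
    (hTid : ∀ (m : ℕ) (x : B m), T m m dvd_rfl x = x)
    (hTcomp : ∀ (m m' m'' : ℕ) (h : m' ∣ m) (h' : m'' ∣ m') (x : B m),
      T m' m'' h' (T m m' h x) = T m m'' (h'.trans h) x)
    (φ : ∀ m : ℕ, (A ⧸ smulSub A m) →+ B m)
    (hφinj : ∀ m : ℕ, NLam L m → Function.Injective (φ m))
    (hφcompat : ∀ (m m' : ℕ) (h : m' ∣ m) (a : A),
      T m m' h (φ m (QuotientAddGroup.mk a)) = φ m' (QuotientAddGroup.mk a))
    (N : ℕ) (hN : NLam L N)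
    (hNtor : ∀ b : (∀ m : {m : ℕ // NLam L m}, B m.1),
      (∀ (m m' : {m : ℕ // NLam L m}) (h : m'.1 ∣ m.1), T m.1 m'.1 h (b m) = b m') →
      (∃ k : ℕ, 0 < k ∧ ∀ m, k • b m = 0) → ∀ m, N • b m = 0)
    (l : ℕ) (hlL : l ∈ L) :
    ∀ x ∈ {x : A | ∀ m : ℕ, NLam L m → x ∈ smulSub A m}, ∀ n : ℕ, 1 ≤ n →
      ∃ y ∈ {x : A | ∀ m : ℕ, NLam L m → x ∈ smulSub A m}, l ^ n • y = x := by
  intro x hx n _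
  have hlp : l.Prime := hL l hlL
  have hpos : 0 < l ^ n * N := Nat.mul_pos (Nat.pow_pos (n := n) hlp.pos) hN.1
  have hln : NLam L (l ^ n * N) := by
    refine ⟨hpos, fun p hp hpd => ?_⟩
    rcases (Nat.Prime.dvd_mul hp).1 hpd with h | h
    · rw [(Nat.prime_dvd_prime_iff_eq hp hlp).1 (hp.dvd_of_dvd_pow h)]; exact hlL
    · exact hN.2 p hp h
  obtain ⟨y₀, hy₀⟩ := hx (l ^ n * N) hln
  have hy₀' : (l ^ n * N) • y₀ = x := hy₀
  set b : ∀ m : {m : ℕ // NLam L m}, B m.1 :=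
    fun m => φ m.1 (QuotientAddGroup.mk y₀) with hb
  have hcompat : ∀ (m m' : {m : ℕ // NLam L m}) (h : m'.1 ∣ m.1),
      T m.1 m'.1 h (b m) = b m' := fun m m' h => hφcompat m.1 m'.1 h y₀
  have htor : ∃ k : ℕ, 0 < k ∧ ∀ m, k • b m = 0 := by
    refine ⟨l ^ n * N, hpos, fun m => ?_⟩
    have h1 : ((l ^ n * N) • (QuotientAddGroup.mk y₀ : A ⧸ smulSub A m.1))
        = QuotientAddGroup.mk x := by
      rw [← hy₀']; rfl
    have h2 : (QuotientAddGroup.mk x : A ⧸ smulSub A m.1) = 0 :=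
      (QuotientAddGroup.eq_zero_iff x).2 (hx m.1 m.2)
    rw [hb, ← map_nsmul, h1, h2, map_zero]
  have hNb := hNtor b hcompat htor
  refine ⟨N • y₀, ?_, ?_⟩
  · intro m hm
    have h3 := hNb ⟨m, hm⟩
    have h4 : φ m (QuotientAddGroup.mk (N • y₀)) = φ m 0 := by
      rw [map_zero]
      have : (QuotientAddGroup.mk (N • y₀) : A ⧸ smulSub A m)
          = N • QuotientAddGroup.mk y₀ := rfl
      rw [this, map_nsmul]; exact h3
    exact (QuotientAddGroup.eq_zero_iff _).1 (hφinj m hm h4)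
  · rw [smul_smul, hy₀']
end

section
/- Let K be a field and define the tame symbol with respect to a discrete valuation v : K× → ℤ with residue field k: ∂({f,g}) = (-1)^{v(f)v(g)} f^{v(g)} g^{-v(f)} mod m. Then ∂ is well-defined on K₂(K), i.e., the map K× × K× → k×, (f,g) ↦ (-1)^{v(f)v(g)} f^{v(g)} g^{-v(f)} mod m, is bimultiplicative and kills pairs (a, 1-a) for a ∈ K× \ {1}, hence factors through the Milnor K-group K₂(K). -/
open scoped TensorProduct

/-- The Steinberg relations: the subgroup of `Kˣ ⊗ Kˣ` generated by `a ⊗ (1 - a)`. -/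
def K2Rel (K : Type*) [Field K] :
    Submodule ℤ (TensorProduct ℤ (Additive Kˣ) (Additive Kˣ)) :=
  Submodule.span ℤ {x | ∃ (a : Kˣ) (h : (a : K) ≠ 1),
    x = Additive.ofMul a ⊗ₜ[ℤ] Additive.ofMul (Units.mk0 (1 - (a : K)) (sub_ne_zero.mpr (Ne.symm h)))}

/-- The Milnor K-group `K₂(K) = (Kˣ ⊗_ℤ Kˣ)/⟨a ⊗ (1-a)⟩`. -/
abbrev K2 (K : Type*) [Field K] : Type _ :=
  TensorProduct ℤ (Additive Kˣ) (Additive Kˣ) ⧸ K2Rel K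

/-- The symbol `{f, g} ∈ K₂(K)`. -/
noncomputable def K2.symbol {K : Type*} [Field K] (f g : Kˣ) : K2 K :=
  Submodule.Quotient.mk (Additive.ofMul f ⊗ₜ[ℤ] Additive.ofMul g)

set_option maxHeartbeats 1000000

namespace TameAux

variable {K k : Type*} [Field K] [Field k]
  (v : Kˣ →* Multiplicative ℤ) (O : Subring K) (r : O →+* k)

/-- The additive valuation. -/
def wt (f : Kˣ) : ℤ := Multiplicative.toAdd (v f)

lemma wt_mul (f g : Kˣ) : wt v (f * g) = wt v f + wt v g := by
  simp [wt, map_mul]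

lemma wt_one : wt v 1 = 0 := by simp [wt]

lemma wt_zpow (f : Kˣ) (n : ℤ) : wt v (f ^ n) = n * wt v f := by
  simp [wt, map_zpow, toAdd_zpow, smul_eq_mul]

lemma wt_inv (f : Kˣ) : wt v f⁻¹ = - wt v f := by
  simp [wt]

lemma wt_neg_one : wt v (-1 : Kˣ) = 0 := by
  have h : ((-1 : Kˣ)) * (-1) = 1 := by ext; simp
  have h2 := wt_mul v (-1) (-1)
  rw [h, wt_one] at h2
  omega

lemma wt_neg (f : Kˣ) : wt v (-f) = wt v f := by
  have h : (-f) = (-1) * f := by ext; simp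
  rw [h, wt_mul, wt_neg_one, zero_add]

variable (hO : ∀ f : Kˣ, (f : K) ∈ O ↔ 0 ≤ Multiplicative.toAdd (v f))
include hO

lemma memO (f : Kˣ) (hf : 0 ≤ wt v f) : (f : K) ∈ O := (hO f).2 hf

/-- A valuation-zero unit of `K` gives a unit of `O`. -/
def toOU (f : Kˣ) (hf : wt v f = 0) : Oˣ where
  val := ⟨f, memO v O hO f hf.ge⟩
  inv := ⟨(f⁻¹ : Kˣ), memO v O hO f⁻¹ (by rw [wt_inv, hf, neg_zero])⟩
  val_inv := Subtype.ext (by simp)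
  inv_val := Subtype.ext (by simp)

lemma map_toOU (f : Kˣ) (hf : wt v f = 0) :
    Units.map O.subtype.toMonoidHom (toOU v O hO f hf) = f := Units.ext rfl

omit hO in
lemma injOU : Function.Injective (Units.map O.subtype.toMonoidHom : Oˣ → Kˣ) :=
  Units.map_injective (fun a b hab => Subtype.ext hab)

lemma toOU_mul (f g : Kˣ) (hf : wt v f = 0) (hg : wt v g = 0) (hfg : wt v (f * g) = 0) :
    toOU v O hO (f * g) hfg = toOU v O hO f hf * toOU v O hO g hg := by
  apply injOU O
  rw [map_mul, map_toOU, map_toOU, map_toOU]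

lemma toOU_zpow (f : Kˣ) (hf : wt v f = 0) (c : ℤ) (h' : wt v (f ^ c) = 0) :
    toOU v O hO (f ^ c) h' = (toOU v O hO f hf) ^ c := by
  apply injOU O
  rw [map_toOU, map_zpow, map_toOU]

/-- The residue of a valuation-zero unit, as a unit of `k`. -/
noncomputable def resU (f : Kˣ) (hf : wt v f = 0) : kˣ :=
  Units.map r (toOU v O hO f hf)

lemma coe_resU (f : Kˣ) (hf : wt v f = 0) :
    (resU v O r hO f hf : k) = r ⟨f, memO v O hO f hf.ge⟩ := rfl

lemma resU_congr {f g : Kˣ} (h : f = g) (hf : wt v f = 0) (hg : wt v g = 0) :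
    resU v O r hO f hf = resU v O r hO g hg := by subst h; rfl

lemma resU_mul (f g : Kˣ) (hf : wt v f = 0) (hg : wt v g = 0) (hfg : wt v (f * g) = 0) :
    resU v O r hO (f * g) hfg = resU v O r hO f hf * resU v O r hO g hg := by
  rw [resU, toOU_mul v O hO f g hf hg hfg, map_mul]; rfl

lemma resU_zpow (f : Kˣ) (hf : wt v f = 0) (c : ℤ) (h' : wt v (f ^ c) = 0) :
    resU v O r hO (f ^ c) h' = (resU v O r hO f hf) ^ c := by
  rw [resU, toOU_zpow v O hO f hf c h', map_zpow]; rfl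

lemma resU_eq_one (f : Kˣ) (hf : wt v f = 0)
    (h : r ⟨f, memO v O hO f hf.ge⟩ = 1) : resU v O r hO f hf = 1 :=
  Units.ext (by rw [coe_resU, h, Units.val_one])

/-- Key lemma: if `f = g ^ c` with `g` of valuation zero and residue 1,
then the residue of `f` is 1. -/
lemma resU_zpow_eq_one (g : Kˣ) (hg : wt v g = 0)
    (hr1 : r ⟨g, memO v O hO g hg.ge⟩ = 1) (c : ℤ) (f : Kˣ) (hf : wt v f = 0)
    (hfg : f = g ^ c) : resU v O r hO f hf = 1 := by
  subst hfg
  rw [resU_zpow v O r hO g hg c hf, resU_eq_one v O r hO g hg hr1, one_zpow]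

/-- The tame symbol as a unit of `K`. -/
def tameU (f g : Kˣ) : Kˣ :=
  (-1 : Kˣ) ^ (wt v f * wt v g) * f ^ (wt v g) * g ^ (-(wt v f))

omit hO in
lemma wt_tameU (f g : Kˣ) : wt v (tameU v f g) = 0 := by
  rw [tameU, wt_mul, wt_mul, wt_zpow, wt_zpow, wt_zpow, wt_neg_one]
  ring

/-- The tame symbol. -/
noncomputable def tame (f g : Kˣ) : kˣ :=
  resU v O r hO (tameU v f g) (wt_tameU v f g)

omit hO in
lemma tameU_mul_left (f₁ f₂ g : Kˣ) :
    tameU v (f₁ * f₂) g = tameU v f₁ g * tameU v f₂ g := by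
  apply Additive.ofMul.injective
  simp only [tameU, ofMul_mul, ofMul_zpow, wt_mul]
  module

omit hO in
lemma tameU_mul_right (f g₁ g₂ : Kˣ) :
    tameU v f (g₁ * g₂) = tameU v f g₁ * tameU v f g₂ := by
  apply Additive.ofMul.injective
  simp only [tameU, ofMul_mul, ofMul_zpow, wt_mul]
  module

omit hO in
lemma tameU_zpow (c : ℤ) (f g : Kˣ) : tameU v (f ^ c) g = tameU v f (g ^ c) := by
  apply Additive.ofMul.injective
  simp only [tameU, ofMul_mul, ofMul_zpow, wt_zpow]
  module

lemma tame_mul_left (f₁ f₂ g : Kˣ) :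
    tame v O r hO (f₁ * f₂) g = tame v O r hO f₁ g * tame v O r hO f₂ g := by
  rw [tame, resU_congr v O r hO (tameU_mul_left v f₁ f₂ g),
    resU_mul v O r hO _ _ (wt_tameU v f₁ g) (wt_tameU v f₂ g)]
  rfl
  · rw [wt_mul, wt_tameU, wt_tameU]; ring

lemma tame_mul_right (f g₁ g₂ : Kˣ) :
    tame v O r hO f (g₁ * g₂) = tame v O r hO f g₁ * tame v O r hO f g₂ := by
  rw [tame, resU_congr v O r hO (tameU_mul_right v f g₁ g₂),
    resU_mul v O r hO _ _ (wt_tameU v f g₁) (wt_tameU v f g₂)]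
  rfl
  · rw [wt_mul, wt_tameU, wt_tameU]; ring

lemma tame_zpow (c : ℤ) (f g : Kˣ) :
    tame v O r hO (f ^ c) g = tame v O r hO f (g ^ c) :=
  resU_congr v O r hO (tameU_zpow v c f g) _ _

omit hO in
lemma neg_one_zpow_even (j : ℤ) (hj : Even j) : ((-1 : Kˣ)) ^ j = 1 := by
  obtain ⟨t, ht⟩ := hj
  have h2 : ((-1 : Kˣ)) ^ (2 : ℤ) = 1 := by
    ext; rw [Units.val_zpow_eq_zpow_val]; norm_num
  rw [ht, show t + t = 2 * t by ring, zpow_mul, h2, one_zpow]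

variable (hker : ∀ (f : Kˣ) (h : (f : K) ∈ O),
      r ⟨(f : K), h⟩ = 0 ↔ 0 < Multiplicative.toAdd (v f))
include hker

lemma r_eq_one (x y : Kˣ) (hx : wt v x = 0) (hy : 0 < wt v y)
    (hxy : (x : K) + (y : K) = 1) : r ⟨x, memO v O hO x hx.ge⟩ = 1 := by
  have hyO : (y : K) ∈ O := memO v O hO y hy.le
  have hsub : (⟨(x : K), memO v O hO x hx.ge⟩ : O) = 1 - ⟨(y : K), hyO⟩ :=
    Subtype.ext (by push_cast; linear_combination hxy)
  rw [hsub, map_sub, map_one, (hker y hyO).2 hy, sub_zero]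


omit hker in
lemma tame_def (f g : Kˣ) :
    tame v O r hO f g = resU v O r hO (tameU v f g) (wt_tameU v f g) := rfl

lemma steinberg
    (hadd : ∀ f g h : Kˣ, (f : K) + (g : K) = (h : K) →
      min (Multiplicative.toAdd (v f)) (Multiplicative.toAdd (v g)) ≤
        Multiplicative.toAdd (v h))
    (a : Kˣ) (ha : (a : K) ≠ 1) :
    tame v O r hO a (Units.mk0 (1 - (a : K)) (sub_ne_zero.mpr (Ne.symm ha))) = 1 := by
  set b : Kˣ := Units.mk0 (1 - (a : K)) (sub_ne_zero.mpr (Ne.symm ha)) with hbdef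
  have hbv : (b : K) = 1 - (a : K) := rfl
  have h1 : min (wt v a) (wt v b) ≤ wt v 1 := hadd a b 1 (by rw [hbv, Units.val_one]; ring)
  have h2 : min (wt v 1) (wt v (-a)) ≤ wt v b :=
    hadd 1 (-a) b (by rw [hbv, Units.val_one, Units.val_neg]; ring)
  have h3 : min (wt v 1) (wt v (-b)) ≤ wt v a :=
    hadd 1 (-b) a (by rw [Units.val_one, Units.val_neg, hbv]; ring)
  simp only [wt_one, wt_neg] at h1 h2 h3
  rw [tame_def]
  rcases lt_trichotomy (wt v a) 0 with hmlt | hm0 | hmgt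
  · -- v(a) < 0 : then v(b) = v(a) < 0
    have hnm : wt v b = wt v a := by omega
    have hainv : (a : K)⁻¹ ≠ 1 := fun hc => ha (by rwa [inv_eq_one] at hc)
    set c : Kˣ := Units.mk0 (1 - (a : K)⁻¹) (sub_ne_zero.mpr (Ne.symm hainv)) with hcdef
    have hcv : (c : K) = 1 - (a : K)⁻¹ := rfl
    have hane : (a : K) ≠ 0 := Units.ne_zero a
    have hc_eq : c = (-1) * b * a⁻¹ := by
      ext
      rw [hcv, Units.val_mul, Units.val_mul, Units.val_neg, Units.val_one,
        Units.val_inv_eq_inv_val, hbv]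
      field_simp
      ring
    have h4 : min (wt v 1) (wt v (-(a⁻¹))) ≤ wt v c :=
      hadd 1 (-(a⁻¹)) c (by rw [hcv, Units.val_one, Units.val_neg, Units.val_inv_eq_inv_val]; ring)
    have h5 : min (wt v c) (wt v a⁻¹) ≤ wt v 1 :=
      hadd c a⁻¹ 1 (by rw [hcv, Units.val_one, Units.val_inv_eq_inv_val]; ring)
    simp only [wt_one, wt_neg, wt_inv] at h4 h5
    have hc0 : wt v c = 0 := by omega
    have hr1 : r ⟨c, memO v O hO c hc0.ge⟩ = 1 :=
      r_eq_one v O r hO hker c a⁻¹ hc0 (by rw [wt_inv]; omega)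
        (by rw [hcv, Units.val_inv_eq_inv_val]; ring)
    have hpar : ((-1 : Kˣ)) ^ (wt v a * wt v a) = (-1 : Kˣ) ^ (-(wt v a)) := by
      rw [show wt v a * wt v a = -(wt v a) + (wt v a * wt v a + wt v a) by ring, zpow_add,
        neg_one_zpow_even (K := K) (wt v a * wt v a + wt v a)
          (by have := Int.even_mul_succ_self (wt v a); rwa [mul_add, mul_one] at this),
        mul_one]
    have hfg : tameU v a b = c ^ (-(wt v a)) := by
      rw [hc_eq, tameU, hnm, hpar]
      apply Additive.ofMul.injective
      simp only [ofMul_mul, ofMul_zpow, ofMul_inv]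
      module
    exact resU_zpow_eq_one v O r hO c hc0 hr1 (-(wt v a)) _ (wt_tameU v a b) hfg
  · -- v(a) = 0 : then v(b) ≥ 0
    have hb0 : 0 ≤ wt v b := by omega
    rcases hb0.eq_or_lt with hbz | hbpos
    · -- v(b) = 0 : the symbol is trivially 1
      have hfg : tameU v a b = (1 : Kˣ) ^ (0 : ℤ) := by
        rw [tameU, hm0, ← hbz]
        simp
      have hr1 : r ⟨(1 : Kˣ), memO v O hO 1 (wt_one v).ge⟩ = 1 := by
        rw [show (⟨((1 : Kˣ) : K), memO v O hO 1 (wt_one v).ge⟩ : O) = 1 from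
          Subtype.ext (by simp), map_one]
      exact resU_zpow_eq_one v O r hO 1 (wt_one v) hr1 0 _ (wt_tameU v a b) hfg
    · -- v(b) > 0 : residue of a is 1
      have hr1 : r ⟨a, memO v O hO a hm0.ge⟩ = 1 :=
        r_eq_one v O r hO hker a b hm0 hbpos (by rw [hbv]; ring)
      have hfg : tameU v a b = a ^ (wt v b) := by
        rw [tameU, hm0]
        simp
      exact resU_zpow_eq_one v O r hO a hm0 hr1 (wt v b) _ (wt_tameU v a b) hfg
  · -- v(a) > 0 : then v(b) = 0 and residue of b is 1
    have hbz : wt v b = 0 := by omega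
    have hr1 : r ⟨b, memO v O hO b hbz.ge⟩ = 1 :=
      r_eq_one v O r hO hker b a hbz hmgt (by rw [hbv]; ring)
    have hfg : tameU v a b = b ^ (-(wt v a)) := by
      rw [tameU, hbz]
      simp
    exact resU_zpow_eq_one v O r hO b hbz hr1 (-(wt v a)) _ (wt_tameU v a b) hfg


noncomputable def tameHom : Additive Kˣ →+ Additive Kˣ →+ Additive kˣ :=
  AddMonoidHom.mk' (fun x => AddMonoidHom.mk'
    (fun y => Additive.ofMul (tame v O r hO x.toMul y.toMul))
    (fun y₁ y₂ => by
      show Additive.ofMul (tame v O r hO _ (Additive.toMul (y₁ + y₂))) = _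
      rw [show Additive.toMul (y₁ + y₂) = Additive.toMul y₁ * Additive.toMul y₂ from rfl,
        tame_mul_right v O r hO, ofMul_mul]))
    (fun x₁ x₂ => by
      refine AddMonoidHom.ext fun y => ?_
      show Additive.ofMul (tame v O r hO (Additive.toMul (x₁ + x₂)) _) = _
      rw [show Additive.toMul (x₁ + x₂) = Additive.toMul x₁ * Additive.toMul x₂ from rfl,
        tame_mul_left v O r hO, ofMul_mul]
      rfl)

omit hker in
lemma tameHom_smul (cz : ℤ) (x y : Additive Kˣ) :
    tameHom v O r hO (cz • x) y = tameHom v O r hO x (cz • y) := by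
  show Additive.ofMul (tame v O r hO (Additive.toMul (cz • x)) _)
    = Additive.ofMul (tame v O r hO _ (Additive.toMul (cz • y)))
  rw [toMul_zsmul, toMul_zsmul, tame_zpow]

noncomputable def tameT : TensorProduct ℤ (Additive Kˣ) (Additive Kˣ) →+ Additive kˣ :=
  TensorProduct.liftAddHom (tameHom v O r hO) (tameHom_smul v O r hO)

omit hker in
lemma tameT_tmul (f g : Kˣ) :
    tameT v O r hO (Additive.ofMul f ⊗ₜ[ℤ] Additive.ofMul g)
      = Additive.ofMul (tame v O r hO f g) := by
  rw [tameT, TensorProduct.liftAddHom_tmul]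
  rfl

end TameAux

/-- Let `K` be a field with a (normalized) discrete valuation `v : Kˣ → ℤ`, valuation
ring `O` and residue field `k` (with residue map `r : O → k` whose kernel consists of
the elements of positive valuation).  The tame symbol
`(f,g) ↦ (-1)^{v(f)v(g)} f^{v(g)} g^{-v(f)} mod m` is bimultiplicative and kills the
pairs `(a, 1-a)`, hence factors through the Milnor K-group: there is a homomorphism
`∂ : K₂(K) → kˣ` computing the tame symbol on each symbol `{f,g}`. -/
theorem tame_symbol_well_defined
    {K k : Type*} [Field K] [Field k]
    (v : Kˣ →* Multiplicative ℤ) (hv : Function.Surjective v)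
    (hadd : ∀ f g h : Kˣ, (f : K) + (g : K) = (h : K) →
      min (Multiplicative.toAdd (v f)) (Multiplicative.toAdd (v g)) ≤
        Multiplicative.toAdd (v h))
    (O : Subring K) (hO : ∀ f : Kˣ, (f : K) ∈ O ↔ 0 ≤ Multiplicative.toAdd (v f))
    (r : O →+* k) (hr : Function.Surjective r)
    (hker : ∀ (f : Kˣ) (h : (f : K) ∈ O),
      r ⟨(f : K), h⟩ = 0 ↔ 0 < Multiplicative.toAdd (v f)) :
    ∃ d : K2 K →+ Additive kˣ,
      ∀ (f g : Kˣ)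
        (h : (-1 : K) ^ (Multiplicative.toAdd (v f) * Multiplicative.toAdd (v g)) *
              (f : K) ^ (Multiplicative.toAdd (v g)) *
              (g : K) ^ (-(Multiplicative.toAdd (v f))) ∈ O),
        ((Additive.toMul (d (K2.symbol f g)) : kˣ) : k) =
          r ⟨(-1 : K) ^ (Multiplicative.toAdd (v f) * Multiplicative.toAdd (v g)) *
              (f : K) ^ (Multiplicative.toAdd (v g)) *
              (g : K) ^ (-(Multiplicative.toAdd (v f))), h⟩ := by
  classical
  let L := (TameAux.tameT v O r hO).toIntLinearMap
  have hle : K2Rel K ≤ LinearMap.ker L := by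
    rw [K2Rel, Submodule.span_le]
    rintro x ⟨a, ha, rfl⟩
    simp only [SetLike.mem_coe, LinearMap.mem_ker]
    show TameAux.tameT v O r hO (_ ⊗ₜ _) = 0
    rw [TameAux.tameT_tmul, TameAux.steinberg v O r hO hker hadd a ha]
    rfl
  refine ⟨(Submodule.liftQ (K2Rel K) L hle).toAddMonoidHom, ?_⟩
  intro f g h
  have h0 : (Submodule.liftQ (K2Rel K) L hle).toAddMonoidHom (K2.symbol f g)
      = Additive.ofMul (TameAux.tame v O r hO f g) := by
    show Submodule.liftQ (K2Rel K) L hle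
        (Submodule.Quotient.mk (Additive.ofMul f ⊗ₜ[ℤ] Additive.ofMul g)) =
      Additive.ofMul (TameAux.tame v O r hO f g)
    rw [Submodule.liftQ_apply]
    exact TameAux.tameT_tmul v O r hO f g
  rw [h0, toMul_ofMul, TameAux.tame_def, TameAux.coe_resU]
  congr 1
  apply Subtype.ext
  show ((TameAux.tameU v f g : Kˣ) : K) = _
  rw [TameAux.tameU]
  simp [Units.val_mul, Units.val_zpow_eq_zpow_val, Units.val_neg, Units.val_one, TameAux.wt]
end
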